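/- For every odd positive integer m, either m is an odd fibbinary number, or there exist unique k ≥ 1 and an odd fibbinary number q such that m = q + (2k - 1) · 2^{L(q)}, where L(q) is the number of binary digits of q; moreover these cases are mutually exclusive and exhaust all odd positive integers. -/

import Mathlib

/-- A natural number is fibbinary if its binary representation has no two consecutive 1 bits. -/
def Fibbinary (m : ℕ) : Prop := ∀ i : ℕ, ¬(m.testBit i ∧ m.testBit (i + 1))

private lemma testBit_top {q a : ℕ} (h1 : 2 ^ a ≤ q) (h2 : q < 2 ^ (a + 1)) :
    q.testBit a = true := by
  have hpos : 0 < 2 ^ a := Nat.two_pow_pos a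
  have hd : q / 2 ^ a = 1 := by
    have h3 : q / 2 ^ a < 2 := (Nat.div_lt_iff_lt_mul hpos).mpr (by rw [pow_succ] at h2; omega)
    have h4 : 1 ≤ q / 2 ^ a := (Nat.one_le_div_iff hpos).mpr h1
    omega
  simp [Nat.testBit_eq_decide_div_mod_eq, hd]

private lemma rep_bits {m k q : ℕ} (hk : 1 ≤ k) (hq0 : Odd q) (hqf : Fibbinary q)
    (hm : m = q + (2 * k - 1) * 2 ^ Nat.size q) :
    m % 2 ^ Nat.size q = q ∧ m / 2 ^ Nat.size q = 2 * k - 1 ∧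
    m.testBit (Nat.size q - 1) = true ∧ m.testBit (Nat.size q) = true := by
  set s := Nat.size q with hs
  have hqpos : 0 < q := hq0.pos
  have hs1 : 1 ≤ s := Nat.size_pos.mpr hqpos
  have hqlt : q < 2 ^ s := Nat.lt_size_self q
  have hqge : 2 ^ (s - 1) ≤ q := Nat.lt_size.mp (by omega)
  have hmod : m % 2 ^ s = q := by
    rw [hm, Nat.add_mul_mod_self_right, Nat.mod_eq_of_lt hqlt]
  have hdiv : m / 2 ^ s = 2 * k - 1 := by
    rw [hm, Nat.add_mul_div_right _ _ (Nat.two_pow_pos s),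
      Nat.div_eq_of_lt hqlt, zero_add]
  refine ⟨hmod, hdiv, ?_, ?_⟩
  · have htop : q.testBit (s - 1) = true := testBit_top hqge (by rwa [Nat.sub_add_cancel hs1])
    have := Nat.testBit_mod_two_pow m s (s - 1)
    rw [hmod, htop] at this
    simpa [show s - 1 < s by omega] using this.symm
  · rw [Nat.testBit_eq_decide_div_mod_eq, hdiv]
    simp
    omega

theorem odd_dichotomy (m : ℕ) (hodd : Odd m) :
    Xor' (Fibbinary m)
      (∃! kq : ℕ × ℕ, 1 ≤ kq.1 ∧ Odd kq.2 ∧ Fibbinary kq.2 ∧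
        m = kq.2 + (2 * kq.1 - 1) * 2 ^ Nat.size kq.2) := by
  by_cases hf : Fibbinary m
  · left
    refine ⟨hf, ?_⟩
    rintro ⟨⟨k, q⟩, ⟨hk, hq0, hqf, hm⟩, -⟩
    obtain ⟨-, -, hb1, hb2⟩ := rep_bits hk hq0 hqf hm
    have hs1 : 1 ≤ Nat.size q := Nat.size_pos.mpr hq0.pos
    exact hf (Nat.size q - 1) ⟨hb1, by rw [Nat.sub_add_cancel hs1]; exact hb2⟩
  · right
    refine ⟨?_, hf⟩
    simp only [Fibbinary, not_forall, not_not] at hf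
    set j := Nat.find hf with hj
    obtain ⟨hj1, hj2⟩ : m.testBit j ∧ m.testBit (j + 1) := Nat.find_spec hf
    have hjmin : ∀ i < j, ¬(m.testBit i ∧ m.testBit (i + 1)) := fun i hi => Nat.find_min hf hi
    set s := j + 1 with hsdef
    set q := m % 2 ^ s with hqdef
    set t := m / 2 ^ s with htdef
    have hqlt : q < 2 ^ s := Nat.mod_lt _ (Nat.two_pow_pos s)
    -- q is odd
    have hqodd : Odd q := by
      have : q % 2 = m % 2 := Nat.mod_mod_of_dvd m (dvd_pow_self 2 (Nat.succ_ne_zero j))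
      rw [Nat.odd_iff] at hodd ⊢
      omega
    -- q is fibbinary
    have hqf : Fibbinary q := by
      intro i ⟨h1, h2⟩
      rw [hqdef, Nat.testBit_mod_two_pow] at h1 h2
      simp only [Bool.and_eq_true, decide_eq_true_eq] at h1 h2
      exact hjmin i (by omega) ⟨h1.2, h2.2⟩
    -- size q = s
    have hqbitj : q.testBit j = true := by
      rw [hqdef, Nat.testBit_mod_two_pow]
      simp [hsdef, hj1]
    have hqgej : 2 ^ j ≤ q := by
      by_contra h
      push_neg at h
      rw [Nat.testBit_lt_two_pow h] at hqbitj
      exact Bool.noConfusion hqbitj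
    have hsize : Nat.size q = s := le_antisymm (Nat.size_le.mpr hqlt) (Nat.lt_size.mpr hqgej)
    -- t is odd
    have htodd : t % 2 = 1 := by
      rw [Nat.testBit_eq_decide_div_mod_eq] at hj2
      simpa [htdef, hsdef] using hj2
    have hmdiv : m = q + t * 2 ^ s := (Nat.mod_add_div' m (2 ^ s)).symm
    clear_value t
    obtain ⟨k, hk1, htk⟩ : ∃ k, 1 ≤ k ∧ 2 * k - 1 = t := ⟨(t + 1) / 2, by omega, by omega⟩
    have hmeq : m = q + (2 * k - 1) * 2 ^ Nat.size q := by
      rw [hsize, htk]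
      exact hmdiv
    refine ⟨(k, q), ⟨hk1, hqodd, hqf, hmeq⟩, ?_⟩
    rintro ⟨k', q'⟩ ⟨hk', hq0', hqf', hm'⟩
    dsimp only at hk' hq0' hqf' hm'
    obtain ⟨hmod', hdiv', hb1', hb2'⟩ := rep_bits hk' hq0' hqf' hm'
    set s' := Nat.size q' with hs'
    have hs'1 : 1 ≤ s' := Nat.size_pos.mpr hq0'.pos
    -- j = s' - 1
    have hjle : j ≤ s' - 1 :=
      Nat.find_min' hf ⟨hb1', by rw [Nat.sub_add_cancel hs'1]; exact hb2'⟩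
    have hjge : ¬ j < s' - 1 := by
      intro hlt
      refine hqf' j ⟨?_, ?_⟩ <;>
      · rw [← hmod', Nat.testBit_mod_two_pow]
        simp only [Bool.and_eq_true, decide_eq_true_eq]
        exact ⟨by omega, by assumption⟩
    have hjeq : j = s' - 1 := by omega
    have hseq : s' = s := by omega
    have hq'eq : q' = q := by rw [← hmod', hseq]
    have hk'eq : k' = k := by
      have : 2 * k' - 1 = t := by rw [← hdiv', hseq]; exact htdef.symm
      omega
    simp [Prod.ext_iff, hq'eq, hk'eq]
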